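/- Let n ≥ 1, r₁,…,r_n > 0 with r_n = min_k r_k, let Y₁,…,Y_{n-1} > 0 with Σ_{k<n} Y_k < 1 and Y_n = 1 - Σ_{k<n} Y_k, and set r(Y) = r_n + Σ_{k<n} Y_k (r_k - r_n). Then for any x₁,…,x_{n-1} ∈ ℝ not all zero, the quadratic form Q(x) = (r_n/Y_n)(Σ_k x_k)² + Σ_k (r_k/Y_k) x_k² - (Σ_k x_k (r_k - r_n))² / r(Y) is strictly positive. -/

import Mathlib

open Finset

/-- Positivity of the quadratic form
`Q(x) = (r_n/Y_n)(Σ x_k)² + Σ_k (r_k/Y_k) x_k² - (Σ_k x_k (r_k - r_n))² / r(Y)`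
used in the strict convexity proof of the relaxation entropy, where `r_n = min_k r_k`,
`Y_k > 0`, `Σ_{k<n} Y_k < 1`, `Y_n = 1 - Σ_{k<n} Y_k` and
`r(Y) = r_n + Σ_{k<n} Y_k (r_k - r_n)`. -/
theorem stmt_9 (m : ℕ) (r : Fin (m + 1) → ℝ) (hr : ∀ k, 0 < r k)
    (hmin : ∀ k, r (Fin.last m) ≤ r k)
    (Y : Fin m → ℝ) (hY : ∀ k, 0 < Y k) (hYsum : ∑ k, Y k < 1)
    (x : Fin m → ℝ) (hx : x ≠ 0) :
    0 < (r (Fin.last m) / (1 - ∑ k, Y k)) * (∑ k, x k) ^ 2 +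
        (∑ k, (r k.castSucc / Y k) * (x k) ^ 2) -
        (∑ k, x k * (r k.castSucc - r (Fin.last m))) ^ 2 /
          (r (Fin.last m) + ∑ k, Y k * (r k.castSucc - r (Fin.last m))) := by
  set rn := r (Fin.last m) with hrn
  have hrnpos : 0 < rn := hr _
  set d : Fin m → ℝ := fun k => r k.castSucc - rn with hd
  have hdnn : ∀ k, 0 ≤ d k := fun k => sub_nonneg.2 (hmin _)
  have hYn : 0 < 1 - ∑ k, Y k := by linarith
  set T : ℝ := ∑ k, Y k * d k with hT
  have hTnn : 0 ≤ T := Finset.sum_nonneg fun k _ => mul_nonneg (hY k).le (hdnn k)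
  have hrY : 0 < rn + T := by linarith
  set A : ℝ := ∑ k, x k ^ 2 * (d k / Y k) with hA
  have hAnn : 0 ≤ A := Finset.sum_nonneg fun k _ =>
    mul_nonneg (sq_nonneg _) (div_nonneg (hdnn k) (hY k).le)
  -- Cauchy–Schwarz
  have hCS : (∑ k, x k * d k) ^ 2 ≤ A * T := by
    have := Finset.sum_mul_sq_le_sq_mul_sq Finset.univ
      (fun k => x k * Real.sqrt (d k / Y k)) (fun k => Real.sqrt (Y k * d k))
    calc (∑ k, x k * d k) ^ 2
        = (∑ k, (x k * Real.sqrt (d k / Y k)) * Real.sqrt (Y k * d k)) ^ 2 := by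
          congr 1
          refine Finset.sum_congr rfl fun k _ => ?_
          rw [mul_assoc, ← Real.sqrt_mul (div_nonneg (hdnn k) (hY k).le)]
          have hy := (hY k).ne'
          have : d k / Y k * (Y k * d k) = d k ^ 2 := by
            field_simp
          rw [this, Real.sqrt_sq (hdnn k)]
      _ ≤ (∑ k, (x k * Real.sqrt (d k / Y k)) ^ 2) * ∑ k, Real.sqrt (Y k * d k) ^ 2 :=
          this
      _ = A * T := by
          congr 1
          · refine Finset.sum_congr rfl fun k _ => ?_
            rw [mul_pow, Real.sq_sqrt (div_nonneg (hdnn k) (hY k).le)]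
          · refine Finset.sum_congr rfl fun k _ => ?_
            exact Real.sq_sqrt (mul_nonneg (hY k).le (hdnn k))
  have hB : (∑ k, x k * d k) ^ 2 / (rn + T) ≤ A := by
    rw [div_le_iff₀ hrY]
    calc (∑ k, x k * d k) ^ 2 ≤ A * T := hCS
      _ ≤ A * (rn + T) := by nlinarith
  -- decompose middle sum
  have hsplit : (∑ k, (r k.castSucc / Y k) * (x k) ^ 2)
      = (∑ k, (rn / Y k) * x k ^ 2) + A := by
    rw [hA, ← Finset.sum_add_distrib]
    refine Finset.sum_congr rfl fun k _ => ?_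
    have hy := (hY k).ne'
    have hk : r k.castSucc = rn + d k := by simp [hd]
    rw [hk]
    field_simp
  -- positivity of the rn part
  obtain ⟨k0, hk0⟩ := Function.ne_iff.1 hx
  have hP : 0 < ∑ k, (rn / Y k) * x k ^ 2 := by
    refine Finset.sum_pos' (fun k _ => mul_nonneg (div_nonneg hrnpos.le (hY k).le) (sq_nonneg _))
      ⟨k0, Finset.mem_univ _, ?_⟩
    exact mul_pos (div_pos hrnpos (hY k0)) (by have h2 : (0:ℝ) < x k0 ^ 2 := pow_pos (abs_pos.2 hk0) 2 |>.trans_le (le_of_eq (sq_abs _)); exact h2)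
  have hL : 0 ≤ (rn / (1 - ∑ k, Y k)) * (∑ k, x k) ^ 2 :=
    mul_nonneg (div_nonneg hrnpos.le hYn.le) (sq_nonneg _)
  have key : (∑ k, x k * (r k.castSucc - rn)) ^ 2 / (rn + ∑ k, Y k * (r k.castSucc - rn)) ≤ A := hB
  rw [hsplit]
  linarith
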